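/- The set $A$ of orientation-preserving homeomorphisms of the circle which commute with some nontrivial finite-order rotation generates the group $\mathrm{Homeo}_0(\mathbb{S}^1)$. -/

import Mathlib

noncomputable section

/-- The circle `ℝ/ℤ`. -/
abbrev S1 : Type := AddCircle (1 : ℝ)

/-- The projection `ℝ → ℝ/ℤ`. -/
def pr : ℝ → S1 := fun x => (x : S1)

instance instGroupHomeomorph (X : Type) [TopologicalSpace X] : Group (X ≃ₜ X) where
  mul f g := g.trans f
  one := Homeomorph.refl X
  inv := Homeomorph.symm
  mul_assoc a b c := Homeomorph.ext fun _ => rfl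
  one_mul a := Homeomorph.ext fun _ => rfl
  mul_one a := Homeomorph.ext fun _ => rfl
  inv_mul_cancel a := Homeomorph.ext fun x => a.symm_apply_apply x

/-- `F` is a lift of the circle homeomorphism `f`: an increasing homeomorphism of `ℝ`
commuting with integer translations and projecting to `f`. -/
def IsLift (f : S1 ≃ₜ S1) (F : ℝ ≃ₜ ℝ) : Prop :=
  StrictMono F ∧ (∀ x : ℝ, F (x + 1) = F x + 1) ∧ ∀ x : ℝ, f (pr x) = pr (F x)

/-- `f` is an orientation-preserving homeomorphism of the circle. -/
def IsOP (f : S1 ≃ₜ S1) : Prop := ∃ F : ℝ ≃ₜ ℝ, IsLift f F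

/-- The group `Homeo₀(S¹)` of orientation-preserving homeomorphisms of the circle. -/
def Homeo0S1 : Subgroup (S1 ≃ₜ S1) where
  carrier := {f | IsOP f}
  one_mem' := ⟨Homeomorph.refl ℝ, strictMono_id, fun _ => rfl, fun _ => rfl⟩
  mul_mem' := by
    rintro a b ⟨A, hA1, hA2, hA3⟩ ⟨B, hB1, hB2, hB3⟩
    refine ⟨B.trans A, hA1.comp hB1, fun x => ?_, fun x => ?_⟩
    · show A (B (x + 1)) = A (B x) + 1
      rw [hB2, hA2]
    · show a (b (pr x)) = pr (A (B x))
      rw [hB3, hA3]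
  inv_mem' := by
    rintro a ⟨A, h1, h2, h3⟩
    refine ⟨A.symm, fun s t hst => ?_, fun x => ?_, fun x => ?_⟩
    · by_contra hc
      push_neg at hc
      have h := h1.monotone hc
      rw [A.apply_symm_apply, A.apply_symm_apply] at h
      exact absurd hst (not_lt.mpr h)
    · apply A.injective
      simp [h2 (A.symm x), A.apply_symm_apply]
    · show a.symm (pr x) = pr (A.symm x)
      have h := h3 (A.symm x)
      rw [A.apply_symm_apply] at h
      rw [← h, a.symm_apply_apply]

/-- The set of orientation-preserving homeomorphisms of the circle commuting with some
nontrivial finite-order rotation. -/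
def RotComm : Set (S1 ≃ₜ S1) :=
  {f | IsOP f ∧ ∃ α : S1, α ≠ 0 ∧ (∃ n : ℕ, 0 < n ∧ n • α = 0) ∧ ∀ θ : S1, f (θ + α) = f θ + α}


structure Lft where
  F : ℝ → ℝ
  mono : StrictMono F
  surj : Function.Surjective F
  per : ∀ x, F (x + 1) = F x + 1

namespace Lft

def iso (a : Lft) : ℝ ≃o ℝ := StrictMono.orderIsoOfSurjective a.F a.mono a.surj

@[simp] lemma iso_apply (a : Lft) (x : ℝ) : a.iso x = a.F x := rfl

def homeo (a : Lft) : ℝ ≃ₜ ℝ := a.iso.toHomeomorph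

@[simp] lemma homeo_apply (a : Lft) (x : ℝ) : a.homeo x = a.F x := rfl

lemma per_int (a : Lft) (x : ℝ) (k : ℤ) : a.F (x + k) = a.F x + k := by
  induction k using Int.induction_on with
  | zero => simp
  | succ n ih =>
      push_cast at ih ⊢
      rw [show x + ((n:ℝ) + 1) = (x + n) + 1 by ring, a.per, ih]; ring
  | pred n ih =>
      push_cast at ih ⊢
      have := a.per (x + (-(n:ℝ) - 1))
      rw [show x + (-(n:ℝ) - 1) + 1 = x + -(n:ℝ) by ring] at this
      rw [ih] at this
      linarith

lemma pr_eq_iff (x y : ℝ) : pr x = pr y ↔ ∃ k : ℤ, y = x + k := by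
  constructor
  · intro h
    have : (y - x : ℝ) ∈ AddSubgroup.zmultiples (1 : ℝ) := by
      rw [← QuotientAddGroup.eq_iff_sub_mem]
      exact h.symm
    obtain ⟨k, hk⟩ := this
    simp only [zsmul_eq_mul, mul_one] at hk
    exact ⟨k, by linarith⟩
  · rintro ⟨k, rfl⟩
    show QuotientAddGroup.mk x = QuotientAddGroup.mk (x + k)
    rw [QuotientAddGroup.eq_iff_sub_mem]
    refine ⟨-k, by simp⟩

end Lft

namespace Lft

def mapS1 (a : Lft) : S1 → S1 :=
  Quotient.map' a.F (by
    intro x y h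
    rw [QuotientAddGroup.leftRel_apply] at *
    obtain ⟨k, hk⟩ := h
    simp only [zsmul_eq_mul, mul_one] at hk
    refine ⟨k, ?_⟩
    simp only [zsmul_eq_mul, mul_one]
    have : y = x + k := by linarith
    rw [this, a.per_int]; ring)

@[simp] lemma mapS1_pr (a : Lft) (x : ℝ) : a.mapS1 (pr x) = pr (a.F x) := rfl

lemma continuous_F (a : Lft) : Continuous a.F := a.homeo.continuous

lemma continuous_mapS1 (a : Lft) : Continuous a.mapS1 :=
  Continuous.quotient_map' a.continuous_F _

def inv (a : Lft) : Lft where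
  F := a.iso.symm
  mono := a.iso.symm.strictMono
  surj := a.iso.symm.surjective
  per := by
    intro x
    apply a.iso.injective
    show a.F _ = a.F _
    rw [a.per (a.iso.symm (x))]
    have h1 : a.F (a.iso.symm (x+1)) = x + 1 := a.iso.apply_symm_apply (x+1)
    have h2 : a.F (a.iso.symm x) = x := a.iso.apply_symm_apply x
    rw [h1, h2]

@[simp] lemma F_inv_F (a : Lft) (x : ℝ) : a.inv.F (a.F x) = x := a.iso.symm_apply_apply x
@[simp] lemma F_F_inv (a : Lft) (x : ℝ) : a.F (a.inv.F x) = x := a.iso.apply_symm_apply x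

def toS1 (a : Lft) : S1 ≃ₜ S1 where
  toFun := a.mapS1
  invFun := a.inv.mapS1
  left_inv := by
    intro x
    induction x using QuotientAddGroup.induction_on with
    | H x => show a.inv.mapS1 (a.mapS1 (pr x)) = pr x; simp
  right_inv := by
    intro x
    induction x using QuotientAddGroup.induction_on with
    | H x => show a.mapS1 (a.inv.mapS1 (pr x)) = pr x; simp
  continuous_toFun := a.continuous_mapS1
  continuous_invFun := a.inv.continuous_mapS1

@[simp] lemma toS1_pr (a : Lft) (x : ℝ) : a.toS1 (pr x) = pr (a.F x) := rfl

def comp (a b : Lft) : Lft where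
  F := a.F ∘ b.F
  mono := a.mono.comp b.mono
  surj := a.surj.comp b.surj
  per := by intro x; simp [Function.comp, b.per, a.per]

lemma toS1_ext {a b : Lft} (h : ∀ x, a.F x = b.F x) : a.toS1 = b.toS1 := by
  apply Homeomorph.ext
  intro x
  induction x using QuotientAddGroup.induction_on with
  | H x => show pr (a.F x) = pr (b.F x); rw [h]

lemma toS1_comp (a b : Lft) : (a.comp b).toS1 = a.toS1 * b.toS1 := by
  apply Homeomorph.ext
  intro x
  induction x using QuotientAddGroup.induction_on with
  | H x => rfl

def one : Lft := ⟨id, strictMono_id, Function.surjective_id, by intro x; rfl⟩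

lemma toS1_one : one.toS1 = 1 := by
  apply Homeomorph.ext
  intro x
  induction x using QuotientAddGroup.induction_on with
  | H x => rfl

lemma toS1_inv (a : Lft) : a.inv.toS1 = (a.toS1)⁻¹ := by
  rw [eq_inv_iff_mul_eq_one, ← toS1_comp]
  rw [← toS1_one]
  exact toS1_ext (fun x => a.F_inv_F x)

lemma isLift (a : Lft) : IsLift a.toS1 a.homeo := ⟨a.mono, a.per, fun _ => rfl⟩

lemma isOP (a : Lft) : IsOP a.toS1 := ⟨a.homeo, a.isLift⟩

end Lft

namespace Lft

lemma pr_add (x y : ℝ) : pr (x + y) = pr x + pr y := rfl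

lemma pr_ne (x y : ℝ) (h : ∀ k : ℤ, y ≠ x + k) : pr x ≠ pr y := by
  intro hc
  obtain ⟨k, hk⟩ := (pr_eq_iff x y).1 hc
  exact h k hk

lemma mem_rotComm (a : Lft) (n : ℕ) (hn : 2 ≤ n)
    (hper : ∀ x, a.F (x + 1/(n:ℝ)) = a.F x + 1/(n:ℝ)) : a.toS1 ∈ RotComm := by
  have hn0 : (0:ℝ) < (n:ℝ) := by positivity
  refine ⟨a.isOP, pr (1/(n:ℝ)), ?_, ⟨n, by omega, ?_⟩, ?_⟩
  · apply Ne.symm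
    apply pr_ne
    intro k hk
    rcases le_or_gt k 0 with h | h
    · have : (k:ℝ) ≤ 0 := by exact_mod_cast h
      have h1 : (0:ℝ) < 1/(n:ℝ) := by positivity
      simp only [zero_add] at hk
      linarith [hk]
    · have : (1:ℝ) ≤ (k:ℝ) := by exact_mod_cast h
      have h1 : 1/(n:ℝ) < 1 := by
        rw [div_lt_one hn0]; exact_mod_cast by omega
      simp only [zero_add] at hk
      linarith [hk]
  · show (n • (pr (1/(n:ℝ))) : S1) = 0
    have : (n • (pr (1/(n:ℝ))) : S1) = pr (n • (1/(n:ℝ))) := by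
      simp [pr]
    rw [this]
    have : (n:ℝ) • (1/(n:ℝ)) = 1 := by
      rw [smul_eq_mul]; field_simp
    rw [show n • (1/(n:ℝ)) = (n:ℝ) • (1/(n:ℝ)) by simp, this]
    have h0 : pr 1 = pr 0 := (pr_eq_iff 1 0).2 ⟨-1, by norm_num⟩
    rw [h0]
    rfl
  · intro θ
    induction θ using QuotientAddGroup.induction_on with
    | H x =>
      show a.toS1 (pr x + pr (1/(n:ℝ))) = a.toS1 (pr x) + pr (1/(n:ℝ))
      rw [← pr_add, toS1_pr, toS1_pr, ← pr_add, hper]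

def InC (a : Lft) : Prop := a.toS1 ∈ Subgroup.closure RotComm

lemma InC.comp {a b : Lft} (ha : InC a) (hb : InC b) : InC (a.comp b) := by
  unfold InC
  rw [toS1_comp]
  exact mul_mem ha hb

lemma InC.inv {a : Lft} (ha : InC a) : InC a.inv := by
  unfold InC
  rw [toS1_inv]
  exact inv_mem ha

lemma inC_of_per (a : Lft) (n : ℕ) (hn : 2 ≤ n)
    (hper : ∀ x, a.F (x + 1/(n:ℝ)) = a.F x + 1/(n:ℝ)) : InC a :=
  Subgroup.subset_closure (a.mem_rotComm n hn hper)

def rot (c : ℝ) : Lft where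
  F := fun x => x + c
  mono := fun x y h => by simpa using h
  surj := fun y => ⟨y - c, by ring⟩
  per := fun x => by ring

lemma inC_rot (c : ℝ) : InC (rot c) :=
  inC_of_per _ 2 le_rfl (fun x => by show x + 1/2 + c = x + c + 1/2; ring)

/-- conjugation by an element of the closure preserves membership -/
lemma InC.of_conj {g a : Lft} (hg : InC g) (h : InC (g.comp (a.comp g.inv))) : InC a := by
  have h2 := (hg.inv).comp (h.comp hg)
  unfold InC at *
  rw [toS1_comp, toS1_comp, toS1_comp, toS1_comp, toS1_inv] at h2
  group at h2
  exact h2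

lemma InC.conj {g a : Lft} (hg : InC g) (ha : InC a) : InC (g.comp (a.comp g.inv)) :=
  hg.comp (ha.comp hg.inv)

end Lft

namespace Lft

lemma fract_eq_of (x : ℝ) (k : ℤ) (r : ℝ) (hx : x = k + r) (h0 : 0 ≤ r) (h1 : r < 1) :
    Int.fract x = r := by
  rw [hx, add_comm, Int.fract_add_intCast, Int.fract_eq_self.2 ⟨h0, h1⟩]

/-- `a` is supported in `[s,t] + ℤ` : it is the identity off that set. -/
def SuppIn (a : Lft) (s t : ℝ) : Prop :=
  ∀ x : ℝ, t - s < Int.fract (x - s) → a.F x = x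

lemma SuppIn.weaken {a : Lft} {s t t' : ℝ} (h : SuppIn a s t) (ht : t ≤ t') :
    SuppIn a s t' := fun x hx => h x (by linarith)

lemma F_inj (a : Lft) {x y : ℝ} (h : a.F x = a.F y) : x = y := a.mono.injective h

/-- the support set is invariant -/
lemma SuppIn.mem_map {a : Lft} {s t : ℝ} (h : SuppIn a s t) {x : ℝ}
    (hx : Int.fract (x - s) ≤ t - s) : Int.fract (a.F x - s) ≤ t - s := by
  by_contra hc
  push_neg at hc
  have : a.F (a.F x) = a.F x := h _ hc
  have : a.F x = x := a.F_inj this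
  rw [this] at hc
  linarith

/-- conjugation by the rotation `rot c` -/
def conjRot (c : ℝ) (a : Lft) : Lft where
  F := fun x => a.F (x - c) + c
  mono := fun x y hxy => by
    dsimp only
    have := a.mono (show x - c < y - c by linarith)
    linarith
  surj := fun y => by
    obtain ⟨z, hz⟩ := a.surj (y - c)
    exact ⟨z + c, by simp [hz]⟩
  per := fun x => by
    have := a.per (x - c)
    rw [show x + 1 - c = x - c + 1 by ring, this]
    ring

lemma conjRot_F (c : ℝ) (a : Lft) (x : ℝ) : (conjRot c a).F x = a.F (x - c) + c := rfl

lemma conjRot_supp {a : Lft} {s t : ℝ} (h : SuppIn a s t) (c : ℝ) :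
    SuppIn (conjRot c a) (s + c) (t + c) := by
  intro x hx
  rw [conjRot_F]
  rw [show t + c - (s + c) = t - s by ring, show x - (s + c) = x - c - s by ring] at hx
  rw [h _ hx]
  ring

lemma rot_inv_F (c : ℝ) (x : ℝ) : (rot c).inv.F x = x - c := by
  apply (rot c).F_inj
  rw [F_F_inv]
  show x = x - c + c
  ring

lemma toS1_conjRot (c : ℝ) (a : Lft) :
    (conjRot c a).toS1 = (rot c).toS1 * a.toS1 * ((rot c).toS1)⁻¹ := by
  rw [← toS1_inv, ← toS1_comp, ← toS1_comp]
  apply toS1_ext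
  intro x
  show a.F (x - c) + c = a.F ((rot c).inv.F x) + c
  rw [rot_inv_F]

lemma InC.conjRot_iff (c : ℝ) (a : Lft) : InC (conjRot c a) ↔ InC a := by
  unfold InC
  rw [toS1_conjRot]
  constructor
  · intro h
    have h2 := mul_mem (mul_mem (inv_mem (inC_rot c)) h) (inC_rot c)
    unfold InC at h2
    group at h2
    exact h2
  · intro h
    exact mul_mem (mul_mem (inC_rot c) h) (inv_mem (inC_rot c))

lemma conjRot_comp (c : ℝ) (a b : Lft) (x : ℝ) :
    (conjRot c (a.comp b)).F x = ((conjRot c a).comp (conjRot c b)).F x := by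
  show a.F (b.F (x - c)) + c = a.F (b.F (x - c) + c - c) + c
  ring_nf

lemma conjRot_conjRot (c d : ℝ) (a : Lft) (x : ℝ) :
    (conjRot c (conjRot d a)).F x = (conjRot (c + d) a).F x := by
  show a.F (x - c - d) + d + c = a.F (x - (c + d)) + (c + d)
  ring_nf

/-- sandwich lemma : conjugating a map supported in `[s,t]+ℤ` by a `ψ` which is the
identity on `[s,t]+ℤ` does nothing. -/
lemma conj_id_on {ψ a : Lft} {s t : ℝ} (hsupp : SuppIn a s t)
    (hid : ∀ x, Int.fract (x - s) ≤ t - s → ψ.F x = x) (x : ℝ) :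
    (ψ.comp (a.comp ψ.inv)).F x = a.F x := by
  show ψ.F (a.F (ψ.inv.F x)) = a.F x
  rcases le_or_gt (Int.fract (x - s)) (t - s) with hx | hx
  · have h1 : ψ.inv.F x = x := by
      apply ψ.F_inj; rw [F_F_inv, hid x hx]
    rw [h1]
    exact hid _ (hsupp.mem_map hx)
  · have hoff : t - s < Int.fract (ψ.inv.F x - s) := by
      by_contra h2
      push_neg at h2
      have h3 := hid _ h2
      rw [F_F_inv] at h3
      rw [← h3] at h2
      linarith
    rw [hsupp _ hoff, F_F_inv, hsupp _ hx]


/-- sandwich lemma : conjugating a map supported in `[s,t]+ℤ` by a `ψ` which is the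
translation by `c` on `[s,t]+ℤ` translates it. -/
lemma conj_trans_on {ψ a : Lft} {s t c : ℝ} (hsupp : SuppIn a s t)
    (htr : ∀ x, Int.fract (x - s) ≤ t - s → ψ.F x = x + c) (x : ℝ) :
    (ψ.comp (a.comp ψ.inv)).F x = (conjRot c a).F x := by
  show ψ.F (a.F (ψ.inv.F x)) = a.F (x - c) + c
  rcases le_or_gt (Int.fract (x - c - s)) (t - s) with hx | hx
  · have h1 : ψ.inv.F x = x - c := by
      apply ψ.F_inj; rw [F_F_inv, htr _ hx]; ring
    rw [h1]
    exact htr _ (hsupp.mem_map hx)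
  · have hoff : t - s < Int.fract (ψ.inv.F x - s) := by
      by_contra h2
      push_neg at h2
      have h3 := htr _ h2
      rw [F_F_inv] at h3
      have h4 : ψ.inv.F x = x - c := by linarith
      rw [h4] at h2
      linarith
    rw [hsupp _ hoff, F_F_inv, hsupp _ hx]
    ring

end Lft

namespace Lft

lemma strictMonoOn_glue {f : ℝ → ℝ} {a b c : ℝ} (hab : a ≤ b) (hbc : b ≤ c)
    (h1 : StrictMonoOn f (Set.Icc a b)) (h2 : StrictMonoOn f (Set.Icc b c)) :
    StrictMonoOn f (Set.Icc a c) := by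
  intro x hx y hy hxy
  rcases le_or_gt x b with h3 | h3
  · rcases le_or_gt y b with h4 | h4
    · exact h1 ⟨hx.1, h3⟩ ⟨hy.1, h4⟩ hxy
    · have hfb : f x ≤ f b := by
        rcases eq_or_lt_of_le h3 with h5 | h5
        · rw [h5]
        · exact le_of_lt (h1 ⟨hx.1, h3⟩ ⟨hab, le_refl b⟩ h5)
      have : f b < f y := h2 ⟨le_refl b, hbc⟩ ⟨le_of_lt h4, hy.2⟩ h4
      linarith
  · exact h2 ⟨le_of_lt h3, hx.2⟩ ⟨by linarith, hy.2⟩ hxy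

/-- build a `Lft` from a homeomorphism of the unit cell `[0,1]`. -/
def cell (q : ℝ → ℝ) (h0 : q 0 = 0) (h1 : q 1 = 1)
    (hmono : StrictMonoOn q (Set.Icc 0 1)) (hcont : ContinuousOn q (Set.Icc 0 1)) : Lft where
  F := fun x => ⌊x⌋ + q (Int.fract x)
  mono := by
    intro x y hxy
    dsimp only
    have hx0 := Int.fract_nonneg x
    have hx1 := Int.fract_lt_one x
    have hy0 := Int.fract_nonneg y
    have hy1 := Int.fract_lt_one y
    rcases eq_or_lt_of_le (Int.le_of_lt_add_one (show (⌊x⌋:ℤ) < ⌊y⌋ + 1 by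
        exact_mod_cast Int.lt_add_one_iff.2 (Int.floor_le_floor hxy.le))) with h | h
    · -- ⌊x⌋ = ⌊y⌋
      have hff : Int.fract x < Int.fract y := by
        unfold Int.fract
        rw [h]
        linarith
      have := hmono ⟨hx0, hx1.le⟩ ⟨hy0, hy1.le⟩ hff
      rw [h]
      exact (add_lt_add_iff_left _).2 this
    · -- ⌊x⌋ < ⌊y⌋
      have hq1 : q (Int.fract x) < 1 := by
        calc q (Int.fract x) < q 1 := hmono ⟨hx0, hx1.le⟩ ⟨zero_le_one, le_refl 1⟩ hx1
        _ = 1 := h1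
      have hq0 : 0 ≤ q (Int.fract y) := by
        rw [← h0]
        exact hmono.monotoneOn ⟨le_refl 0, zero_le_one⟩ ⟨hy0, hy1.le⟩ hy0
      have : (⌊x⌋:ℝ) + 1 ≤ (⌊y⌋:ℝ) := by exact_mod_cast h
      linarith
  surj := by
    intro y
    have h00 : (0:ℝ) ∈ Set.Icc (0:ℝ) 1 := by constructor <;> norm_num
    have h11 : (1:ℝ) ∈ Set.Icc (0:ℝ) 1 := by constructor <;> norm_num
    have hy0 := Int.fract_nonneg y
    have hy1 := Int.fract_lt_one y
    have hIcc : Set.Icc (q 0) (q 1) ⊆ q '' Set.Icc 0 1 :=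
      intermediate_value_Icc zero_le_one hcont
    obtain ⟨x, hx, hqx⟩ := hIcc (by rw [h0, h1]; exact ⟨hy0, hy1.le⟩)
    have hxlt : x < 1 := by
      rcases eq_or_lt_of_le hx.2 with h | h
      · exfalso; rw [h, h1] at hqx; linarith
      · exact h
    refine ⟨(⌊y⌋ : ℝ) + x, ?_⟩
    dsimp only
    have hfr : Int.fract ((⌊y⌋:ℝ) + x) = x := by
      rw [Int.fract_intCast_add, Int.fract_eq_self.2 ⟨hx.1, hxlt⟩]
    have hfl : (⌊(⌊y⌋:ℝ) + x⌋ : ℤ) = ⌊y⌋ := by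
      rw [add_comm, Int.floor_add_intCast x ⌊y⌋, Int.floor_eq_zero_iff.2 ⟨hx.1, hxlt⟩]
      ring
    rw [hfr, hfl, hqx]
    have := Int.floor_add_fract y
    linarith
  per := by
    intro x
    rw [Int.fract_add_one]
    have : (⌊x + 1⌋ : ℤ) = ⌊x⌋ + 1 := by
      exact_mod_cast Int.floor_add_intCast x 1
    rw [this]
    push_cast
    ring

end Lft

set_option linter.unusedSectionVars false

namespace Lft

def aff (x₁ y₁ x₂ y₂ t : ℝ) : ℝ := y₁ + (t - x₁) * ((y₂ - y₁) / (x₂ - x₁))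

lemma aff_left (x₁ y₁ x₂ y₂ : ℝ) : aff x₁ y₁ x₂ y₂ x₁ = y₁ := by
  unfold aff; ring

lemma aff_right {x₁ x₂ : ℝ} (y₁ y₂ : ℝ) (h : x₁ < x₂) : aff x₁ y₁ x₂ y₂ x₂ = y₂ := by
  unfold aff
  have h' : x₂ - x₁ ≠ 0 := sub_ne_zero.2 (ne_of_gt h)
  field_simp
  ring

lemma aff_strictMono {x₁ y₁ x₂ y₂ : ℝ} (hx : x₁ < x₂) (hy : y₁ < y₂) :
    StrictMono (aff x₁ y₁ x₂ y₂) := by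
  intro t s hts
  unfold aff
  have hs : 0 < (y₂ - y₁) / (x₂ - x₁) := div_pos (by linarith) (by linarith)
  have := mul_lt_mul_of_pos_right (show t - x₁ < s - x₁ by linarith) hs
  linarith

lemma aff_continuous (x₁ y₁ x₂ y₂ : ℝ) : Continuous (aff x₁ y₁ x₂ y₂) := by
  unfold aff
  fun_prop

/-- piecewise linear map with two segments -/
def pl2 (m v : ℝ) : ℝ → ℝ := fun t => if t ≤ m then aff 0 0 m v t else aff m v 1 1 t

/-- piecewise linear map with four segments -/
def pl4 (x₁ y₁ x₂ y₂ x₃ y₃ : ℝ) : ℝ → ℝ := fun t =>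
  if t ≤ x₁ then aff 0 0 x₁ y₁ t
  else if t ≤ x₂ then aff x₁ y₁ x₂ y₂ t
  else if t ≤ x₃ then aff x₂ y₂ x₃ y₃ t
  else aff x₃ y₃ 1 1 t

section pl2
variable {m v : ℝ} (hm0 : 0 < m) (hm1 : m < 1) (hv0 : 0 < v) (hv1 : v < 1)

include hm0 hm1 hv0 hv1

lemma pl2_zero : pl2 m v 0 = 0 := by
  unfold pl2
  rw [if_pos hm0.le, aff_left]

lemma pl2_one : pl2 m v 1 = 1 := by
  unfold pl2
  rw [if_neg (not_le.2 hm1), aff_right _ _ hm1]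

lemma pl2_at_m : pl2 m v m = v := by
  unfold pl2
  rw [if_pos le_rfl, aff_right _ _ hm0]

lemma pl2_eval0 (t : ℝ) (ht : t ≤ m) : pl2 m v t = aff 0 0 m v t := by
  unfold pl2; rw [if_pos ht]

lemma pl2_eval1 (t : ℝ) (ht : m ≤ t) : pl2 m v t = aff m v 1 1 t := by
  unfold pl2
  rcases le_or_gt t m with h | h
  · have : t = m := le_antisymm h ht
    rw [this, if_pos le_rfl, aff_right _ _ hm0, aff_left]
  · rw [if_neg (not_le.2 h)]

lemma pl2_mono : StrictMonoOn (pl2 m v) (Set.Icc 0 1) := by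
  apply strictMonoOn_glue hm0.le hm1.le
  · intro a ha b hb hab
    rw [pl2_eval0 hm0 hm1 hv0 hv1 _ ha.2, pl2_eval0 hm0 hm1 hv0 hv1 _ hb.2]
    exact aff_strictMono hm0 hv0 hab
  · intro a ha b hb hab
    rw [pl2_eval1 hm0 hm1 hv0 hv1 _ ha.1, pl2_eval1 hm0 hm1 hv0 hv1 _ hb.1]
    exact aff_strictMono hm1 hv1 hab

lemma pl2_continuous : Continuous (pl2 m v) := by
  unfold pl2
  apply Continuous.if_le (aff_continuous _ _ _ _) (aff_continuous _ _ _ _)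
    continuous_id continuous_const
  intro t ht
  have ht' : t = m := ht
  rw [ht', aff_right _ _ hm0, aff_left]

end pl2

section pl4
variable {x₁ y₁ x₂ y₂ x₃ y₃ : ℝ}
  (h01 : 0 < x₁) (h12 : x₁ < x₂) (h23 : x₂ < x₃) (h34 : x₃ < 1)
  (k01 : 0 < y₁) (k12 : y₁ < y₂) (k23 : y₂ < y₃) (k34 : y₃ < 1)

include h01 h12 h23 h34

lemma pl4_eval0 (t : ℝ) (ht : t ≤ x₁) : pl4 x₁ y₁ x₂ y₂ x₃ y₃ t = aff 0 0 x₁ y₁ t := by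
  unfold pl4; rw [if_pos ht]

lemma pl4_eval1 (t : ℝ) (ht1 : x₁ ≤ t) (ht2 : t ≤ x₂) :
    pl4 x₁ y₁ x₂ y₂ x₃ y₃ t = aff x₁ y₁ x₂ y₂ t := by
  unfold pl4
  rcases le_or_gt t x₁ with h | h
  · have : t = x₁ := le_antisymm h ht1
    rw [this, if_pos le_rfl, aff_right _ _ h01, aff_left]
  · rw [if_neg (not_le.2 h), if_pos ht2]

lemma pl4_eval2 (t : ℝ) (ht1 : x₂ ≤ t) (ht2 : t ≤ x₃) :
    pl4 x₁ y₁ x₂ y₂ x₃ y₃ t = aff x₂ y₂ x₃ y₃ t := by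
  unfold pl4
  rcases le_or_gt t x₂ with h | h
  · have ht : t = x₂ := le_antisymm h ht1
    rw [ht, if_neg (not_le.2 h12), if_pos le_rfl, aff_right _ _ h12, aff_left]
  · rw [if_neg (by linarith), if_neg (not_le.2 h), if_pos ht2]

lemma pl4_eval3 (t : ℝ) (ht1 : x₃ ≤ t) :
    pl4 x₁ y₁ x₂ y₂ x₃ y₃ t = aff x₃ y₃ 1 1 t := by
  unfold pl4
  rcases le_or_gt t x₃ with h | h
  · have ht : t = x₃ := le_antisymm h ht1
    rw [ht, if_neg (not_le.2 (by linarith)), if_neg (not_le.2 h23), if_pos le_rfl,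
      aff_right _ _ h23, aff_left]
  · rw [if_neg (by linarith), if_neg (by linarith), if_neg (not_le.2 h)]

include k01 k12 k23 k34

lemma pl4_mono : StrictMonoOn (pl4 x₁ y₁ x₂ y₂ x₃ y₃) (Set.Icc 0 1) := by
  apply strictMonoOn_glue (by linarith : (0:ℝ) ≤ x₂) (by linarith : x₂ ≤ 1)
  · apply strictMonoOn_glue h01.le h12.le
    · intro a ha b hb hab
      rw [pl4_eval0 h01 h12 h23 h34 _ ha.2, pl4_eval0 h01 h12 h23 h34 _ hb.2]
      exact aff_strictMono h01 k01 hab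
    · intro a ha b hb hab
      rw [pl4_eval1 h01 h12 h23 h34 _ ha.1 ha.2, pl4_eval1 h01 h12 h23 h34 _ hb.1 hb.2]
      exact aff_strictMono h12 k12 hab
  · apply strictMonoOn_glue h23.le h34.le
    · intro a ha b hb hab
      rw [pl4_eval2 h01 h12 h23 h34 _ ha.1 ha.2, pl4_eval2 h01 h12 h23 h34 _ hb.1 hb.2]
      exact aff_strictMono h23 k23 hab
    · intro a ha b hb hab
      rw [pl4_eval3 h01 h12 h23 h34 _ ha.1, pl4_eval3 h01 h12 h23 h34 _ hb.1]
      exact aff_strictMono h34 k34 hab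

lemma pl4_continuous : Continuous (pl4 x₁ y₁ x₂ y₂ x₃ y₃) := by
  unfold pl4
  apply Continuous.if_le (aff_continuous _ _ _ _) ?_ continuous_id continuous_const
  · intro t ht
    have ht' : t = x₁ := ht
    rw [ht', if_pos h12.le, aff_right _ _ h01, aff_left]
  · apply Continuous.if_le (aff_continuous _ _ _ _) ?_ continuous_id continuous_const
    · intro t ht
      have ht' : t = x₂ := ht
      rw [ht', if_pos h23.le, aff_right _ _ h12, aff_left]
    · apply Continuous.if_le (aff_continuous _ _ _ _) (aff_continuous _ _ _ _)
        continuous_id continuous_const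
      intro t ht
      have ht' : t = x₃ := ht
      rw [ht', aff_right _ _ h23, aff_left]

lemma pl4_zero : pl4 x₁ y₁ x₂ y₂ x₃ y₃ 0 = 0 := by
  rw [pl4_eval0 h01 h12 h23 h34 _ h01.le, aff_left]

lemma pl4_one : pl4 x₁ y₁ x₂ y₂ x₃ y₃ 1 = 1 := by
  rw [pl4_eval3 h01 h12 h23 h34 _ h34.le, aff_right _ _ h34]

end pl4

end Lft

namespace Lft

lemma cell_F (q : ℝ → ℝ) (h0 h1 hmono hcont) (x : ℝ) :
    (cell q h0 h1 hmono hcont).F x = ⌊x⌋ + q (Int.fract x) := rfl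

def scaleTo (n : ℕ) (hn : 0 < n) (a : Lft) : Lft where
  F := fun x => a.F (n * x) / n
  mono := by
    intro x y hxy
    dsimp only
    have hn' : (0:ℝ) < n := by exact_mod_cast hn
    have := a.mono (show (n:ℝ) * x < n * y by exact mul_lt_mul_of_pos_left hxy hn')
    exact (div_lt_div_iff_of_pos_right hn').2 this
  surj := by
    intro y
    have hn' : (0:ℝ) < n := by exact_mod_cast hn
    obtain ⟨z, hz⟩ := a.surj ((n:ℝ) * y)
    exact ⟨z / n, by dsimp only; rw [mul_div_cancel₀ z (ne_of_gt hn'), hz,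
      mul_div_cancel_left₀ y (ne_of_gt hn')]⟩
  per := by
    intro x
    have hn' : (0:ℝ) < n := by exact_mod_cast hn
    have h := a.per_int ((n:ℝ)*x) n
    push_cast at h
    rw [mul_add, mul_one, h]
    field_simp

lemma scaleTo_F (n : ℕ) (hn : 0 < n) (a : Lft) (x : ℝ) :
    (scaleTo n hn a).F x = a.F (n * x) / n := rfl

lemma scaleTo_pern (n : ℕ) (hn : 0 < n) (a : Lft) (x : ℝ) :
    (scaleTo n hn a).F (x + 1/(n:ℝ)) = (scaleTo n hn a).F x + 1/(n:ℝ) := by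
  have hn' : (0:ℝ) < n := by exact_mod_cast hn
  rw [scaleTo_F, scaleTo_F]
  rw [mul_add, mul_one_div, div_self (ne_of_gt hn')]
  have := a.per_int ((n:ℝ)*x) 1
  push_cast at this
  rw [this]
  field_simp

lemma inC_scaleTo (n : ℕ) (hn : 2 ≤ n) (a : Lft) :
    InC (scaleTo n (by omega) a) :=
  inC_of_per _ n hn (fun x => scaleTo_pern n (by omega) a x)

lemma scaleTo_eval (n : ℕ) (hn : 0 < n) (q : ℝ → ℝ) (h0 h1 hmono hcont)
    (x : ℝ) (k : ℤ) (r : ℝ) (hx : (n:ℝ) * x = k + r) (hr0 : 0 ≤ r) (hr1 : r < 1) :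
    (scaleTo n hn (cell q h0 h1 hmono hcont)).F x = (k + q r) / n := by
  rw [scaleTo_F, cell_F]
  rw [fract_eq_of _ k r hx hr0 hr1]
  have hfl : ⌊(n:ℝ) * x⌋ = k := by
    rw [hx, add_comm, Int.floor_add_intCast, Int.floor_eq_zero_iff.2 ⟨hr0, hr1⟩, zero_add]
  rw [hfl]

/-- the identity segment : `aff 0 0 c c t = t` -/
lemma aff_id {c : ℝ} (hc : c ≠ 0) (t : ℝ) : aff 0 0 c c t = t := by
  unfold aff
  simp only [sub_zero, zero_add]
  rw [div_self hc]
  ring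

/-- slope-one segment -/
lemma aff_slope_one {x₁ y₁ x₂ y₂ : ℝ} (h : x₂ - x₁ = y₂ - y₁) (hne : x₂ - x₁ ≠ 0) (t : ℝ) :
    aff x₁ y₁ x₂ y₂ t = t - x₁ + y₁ := by
  unfold aff
  rw [← h, div_self hne]
  ring

/-- two points at distance `∉ (ℓ, 1-ℓ) mod 1` cannot both be in the support set -/
lemma not_both {x c₁ c₂ ℓ : ℝ} (hd : ℓ < c₁ - c₂) (hd2 : c₁ - c₂ < 1 - ℓ)
    (h₁ : Int.fract (x - c₁) ≤ ℓ) (h₂ : Int.fract (x - c₂) ≤ ℓ) : False := by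
  have r₁0 := Int.fract_nonneg (x - c₁)
  have r₂0 := Int.fract_nonneg (x - c₂)
  set a := ⌊x - c₁⌋
  set b := ⌊x - c₂⌋
  have ha : (a:ℝ) + Int.fract (x - c₁) = x - c₁ := Int.floor_add_fract _
  have hb : (b:ℝ) + Int.fract (x - c₂) = x - c₂ := Int.floor_add_fract _
  have hk0 : (0:ℝ) < (b - a : ℤ) := by push_cast; linarith
  have hk1 : ((b - a : ℤ) : ℝ) < 1 := by push_cast; linarith
  have h1 : (0:ℤ) < b - a := by exact_mod_cast hk0
  have h2 : (b - a : ℤ) < 1 := by exact_mod_cast hk1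
  omega

end Lft

namespace Lft

section periodize
variable {H : Lft} {ℓ : ℝ} (hl0 : 0 ≤ ℓ) (hl : ℓ < 1/4) (hs : SuppIn H 0 ℓ)

include hl0 hl hs

lemma hofH : ∀ y, ℓ < Int.fract y → H.F y = y := fun y hy => hs y (by simpa using hy)

lemma hmmH : ∀ y, Int.fract y ≤ ℓ → Int.fract (H.F y) ≤ ℓ := fun y hy => by
  have := hs.mem_map (x := y) (by simpa using hy)
  simpa using this

lemma per2 (x : ℝ) :
    (H.comp (conjRot (1/2) H)).F (x + 1/2) = (H.comp (conjRot (1/2) H)).F x + 1/2 := by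
  have hof := hofH hl0 hl hs
  have hmem := hmmH hl0 hl hs
  have hT : ∀ y, (conjRot (1/2) H).F y = H.F (y - 1/2) + 1/2 := fun y => rfl
  show H.F ((conjRot (1/2) H).F (x+1/2)) = H.F ((conjRot (1/2) H).F x) + 1/2
  rcases le_or_gt (Int.fract x) ℓ with c0 | c0
  · have cx2 : ℓ < Int.fract (x - 1/2) := by
      by_contra hc; push_neg at hc
      exact not_both (c₁ := 1/2) (c₂ := 0) (by linarith) (by linarith) hc (by simpa using c0)
    have hTx : (conjRot (1/2) H).F x = x := by rw [hT, hof _ cx2]; ring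
    have hTx2 : (conjRot (1/2) H).F (x + 1/2) = H.F x + 1/2 := by
      rw [hT, show x + 1/2 - 1/2 = x by ring]
    set y := H.F x with hy
    have hy1 : Int.fract y ≤ ℓ := hmem _ c0
    have hyoff : ℓ < Int.fract (y + 1/2) := by
      by_contra hc; push_neg at hc
      refine not_both (c₁ := 1/2) (c₂ := 0) (x := y + 1/2) (ℓ := ℓ)
        (by linarith) (by linarith) ?_ (by simpa using hc)
      rw [show y + 1/2 - 1/2 = y by ring]; exact hy1
    rw [hTx2, hTx, hof _ hyoff]
  · rcases le_or_gt (Int.fract (x - 1/2)) ℓ with c1 | c1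
    · set w := H.F (x - 1/2) with hw
      have hw1 : Int.fract w ≤ ℓ := hmem _ c1
      have hTx : (conjRot (1/2) H).F x = w + 1/2 := hT x
      have hwoff : ℓ < Int.fract (w + 1/2) := by
        by_contra hc; push_neg at hc
        refine not_both (c₁ := 1/2) (c₂ := 0) (x := w + 1/2) (ℓ := ℓ)
          (by linarith) (by linarith) ?_ (by simpa using hc)
        rw [show w + 1/2 - 1/2 = w by ring]; exact hw1
      have hGx : H.F ((conjRot (1/2) H).F x) = w + 1/2 := by rw [hTx, hof _ hwoff]
      have hHx : H.F x = x := hof _ c0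
      have hTx2 : (conjRot (1/2) H).F (x + 1/2) = x + 1/2 := by
        rw [hT, show x + 1/2 - 1/2 = x by ring, hHx]
      have hstep : H.F (x + 1/2) = w + 1 := by
        rw [show x + 1/2 = (x - 1/2) + 1 by ring, H.per, ← hw]
      rw [hTx2, hstep, hGx]; ring
    · have hHx : H.F x = x := hof _ c0
      have hTx : (conjRot (1/2) H).F x = x := by rw [hT, hof _ c1]; ring
      have hTx2 : (conjRot (1/2) H).F (x+1/2) = x + 1/2 := by
        rw [hT, show x + 1/2 - 1/2 = x by ring, hHx]
      have hfr : ℓ < Int.fract (x + 1/2) := by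
        rw [show x + 1/2 = (x - 1/2) + 1 by ring, Int.fract_add_one]; exact c1
      rw [hTx2, hTx, hof _ hfr, hHx]

lemma per3 (x : ℝ) :
    (H.comp ((conjRot (1/3) H).comp (conjRot (2/3) H))).F (x + 1/3)
      = (H.comp ((conjRot (1/3) H).comp (conjRot (2/3) H))).F x + 1/3 := by
  have hof := hofH hl0 hl hs
  have hmem := hmmH hl0 hl hs
  have hT1 : ∀ y, (conjRot (1/3) H).F y = H.F (y - 1/3) + 1/3 := fun y => rfl
  have hT2 : ∀ y, (conjRot (2/3) H).F y = H.F (y - 2/3) + 2/3 := fun y => rfl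
  show H.F ((conjRot (1/3) H).F ((conjRot (2/3) H).F (x+1/3)))
      = H.F ((conjRot (1/3) H).F ((conjRot (2/3) H).F x)) + 1/3
  rcases le_or_gt (Int.fract x) ℓ with c0 | c0
  · -- x in the base support copy
    have x13 : ℓ < Int.fract (x - 1/3) := by
      by_contra hc; push_neg at hc
      exact not_both (c₁ := 1/3) (c₂ := 0) (by linarith) (by linarith) hc (by simpa using c0)
    have x23 : ℓ < Int.fract (x - 2/3) := by
      by_contra hc; push_neg at hc
      exact not_both (c₁ := 2/3) (c₂ := 0) (by linarith) (by linarith) hc (by simpa using c0)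
    have hT2x : (conjRot (2/3) H).F x = x := by rw [hT2, hof _ x23]; ring
    have hT1x : (conjRot (1/3) H).F x = x := by rw [hT1, hof _ x13]; ring
    set y := H.F x with hy
    have hy1 : Int.fract y ≤ ℓ := hmem _ c0
    have hA : (conjRot (2/3) H).F (x + 1/3) = x + 1/3 := by
      rw [hT2, show x + 1/3 - 2/3 = x - 1/3 by ring, hof _ x13]; ring
    have hB : (conjRot (1/3) H).F (x + 1/3) = y + 1/3 := by
      rw [hT1, show x + 1/3 - 1/3 = x by ring]
    have hyoff : ℓ < Int.fract (y + 1/3) := by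
      by_contra hc; push_neg at hc
      refine not_both (c₁ := 1/3) (c₂ := 0) (x := y + 1/3) (ℓ := ℓ)
        (by linarith) (by linarith) ?_ (by simpa using hc)
      rw [show y + 1/3 - 1/3 = y by ring]; exact hy1
    rw [hA, hB, hof _ hyoff, hT2x, hT1x]
  · rcases le_or_gt (Int.fract (x - 1/3)) ℓ with c1 | c1
    · -- x in the 1/3 copy
      have x23 : ℓ < Int.fract (x - 2/3) := by
        by_contra hc; push_neg at hc
        exact not_both (c₁ := 2/3) (c₂ := 1/3) (by linarith) (by linarith) hc c1
      set w := H.F (x - 1/3) with hw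
      have hw1 : Int.fract w ≤ ℓ := hmem _ c1
      have hw13off : ℓ < Int.fract (w + 1/3) := by
        by_contra hc; push_neg at hc
        refine not_both (c₁ := 1/3) (c₂ := 0) (x := w + 1/3) (ℓ := ℓ)
          (by linarith) (by linarith) ?_ (by simpa using hc)
        rw [show w + 1/3 - 1/3 = w by ring]; exact hw1
      have hw23off : ℓ < Int.fract (w + 2/3) := by
        by_contra hc; push_neg at hc
        refine not_both (c₁ := 2/3) (c₂ := 0) (x := w + 2/3) (ℓ := ℓ)
          (by linarith) (by linarith) ?_ (by simpa using hc)
        rw [show w + 2/3 - 2/3 = w by ring]; exact hw1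
      have hT2x : (conjRot (2/3) H).F x = x := by rw [hT2, hof _ x23]; ring
      have hT1x : (conjRot (1/3) H).F x = w + 1/3 := hT1 x
      have hGx : H.F ((conjRot (1/3) H).F ((conjRot (2/3) H).F x)) = w + 1/3 := by
        rw [hT2x, hT1x, hof _ hw13off]
      have hA : (conjRot (2/3) H).F (x + 1/3) = w + 2/3 := by
        rw [hT2, show x + 1/3 - 2/3 = x - 1/3 by ring, ← hw]
      have hB : (conjRot (1/3) H).F (w + 2/3) = w + 2/3 := by
        rw [hT1, show w + 2/3 - 1/3 = w + 1/3 by ring, hof _ hw13off]; ring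
      rw [hA, hB, hof _ hw23off, hGx]; ring
    · rcases le_or_gt (Int.fract (x - 2/3)) ℓ with c2 | c2
      · -- x in the 2/3 copy
        set w := H.F (x - 2/3) with hw
        have hw1 : Int.fract w ≤ ℓ := hmem _ c2
        have hw13off : ℓ < Int.fract (w + 1/3) := by
          by_contra hc; push_neg at hc
          refine not_both (c₁ := 1/3) (c₂ := 0) (x := w + 1/3) (ℓ := ℓ)
            (by linarith) (by linarith) ?_ (by simpa using hc)
          rw [show w + 1/3 - 1/3 = w by ring]; exact hw1
        have hw23off : ℓ < Int.fract (w + 2/3) := by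
          by_contra hc; push_neg at hc
          refine not_both (c₁ := 2/3) (c₂ := 0) (x := w + 2/3) (ℓ := ℓ)
            (by linarith) (by linarith) ?_ (by simpa using hc)
          rw [show w + 2/3 - 2/3 = w by ring]; exact hw1
        have hT2x : (conjRot (2/3) H).F x = w + 2/3 := hT2 x
        have hB : (conjRot (1/3) H).F (w + 2/3) = w + 2/3 := by
          rw [hT1, show w + 2/3 - 1/3 = w + 1/3 by ring, hof _ hw13off]; ring
        have hGx : H.F ((conjRot (1/3) H).F ((conjRot (2/3) H).F x)) = w + 2/3 := by
          rw [hT2x, hB, hof _ hw23off]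
        have hA : (conjRot (2/3) H).F (x + 1/3) = x + 1/3 := by
          rw [hT2, show x + 1/3 - 2/3 = x - 1/3 by ring, hof _ c1]; ring
        have hHx : H.F x = x := hof _ c0
        have hC : (conjRot (1/3) H).F (x + 1/3) = x + 1/3 := by
          rw [hT1, show x + 1/3 - 1/3 = x by ring, hHx]
        have hD : H.F (x + 1/3) = w + 1 := by
          rw [show x + 1/3 = (x - 2/3) + 1 by ring, H.per, ← hw]
        rw [hA, hC, hD, hGx]; ring
      · -- x off all copies
        have hHx : H.F x = x := hof _ c0
        have hT2x : (conjRot (2/3) H).F x = x := by rw [hT2, hof _ c2]; ring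
        have hT1x : (conjRot (1/3) H).F x = x := by rw [hT1, hof _ c1]; ring
        have hA : (conjRot (2/3) H).F (x + 1/3) = x + 1/3 := by
          rw [hT2, show x + 1/3 - 2/3 = x - 1/3 by ring, hof _ c1]; ring
        have hB : (conjRot (1/3) H).F (x + 1/3) = x + 1/3 := by
          rw [hT1, show x + 1/3 - 1/3 = x by ring, hHx]
        have hfr : ℓ < Int.fract (x + 1/3) := by
          rw [show x + 1/3 = (x - 2/3) + 1 by ring, Int.fract_add_one]; exact c2
        rw [hA, hB, hof _ hfr, hT2x, hT1x, hHx]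

end periodize

end Lft

namespace Lft

def psi1 : Lft :=
  scaleTo 3 (by norm_num)
    (cell (pl4 (3/100) (3/100) (1/2) (1/4) (53/100) (28/100))
      (pl4_zero (by norm_num) (by norm_num) (by norm_num) (by norm_num)
        (by norm_num) (by norm_num) (by norm_num) (by norm_num))
      (pl4_one (by norm_num) (by norm_num) (by norm_num) (by norm_num)
        (by norm_num) (by norm_num) (by norm_num) (by norm_num))
      (pl4_mono (by norm_num) (by norm_num) (by norm_num) (by norm_num)
        (by norm_num) (by norm_num) (by norm_num) (by norm_num))
      ((pl4_continuous (by norm_num) (by norm_num) (by norm_num) (by norm_num)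
        (by norm_num) (by norm_num) (by norm_num) (by norm_num)).continuousOn))

def psi2 : Lft :=
  scaleTo 2 (by norm_num)
    (cell (pl4 (1/50) (1/50) (5/6) (2/3) (64/75) (103/150))
      (pl4_zero (by norm_num) (by norm_num) (by norm_num) (by norm_num)
        (by norm_num) (by norm_num) (by norm_num) (by norm_num))
      (pl4_one (by norm_num) (by norm_num) (by norm_num) (by norm_num)
        (by norm_num) (by norm_num) (by norm_num) (by norm_num))
      (pl4_mono (by norm_num) (by norm_num) (by norm_num) (by norm_num)
        (by norm_num) (by norm_num) (by norm_num) (by norm_num))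
      ((pl4_continuous (by norm_num) (by norm_num) (by norm_num) (by norm_num)
        (by norm_num) (by norm_num) (by norm_num) (by norm_num)).continuousOn))

lemma psi1_id (x : ℝ) (hx : Int.fract x ≤ 1/100) : psi1.F x = x := by
  have h0 := Int.fract_nonneg x
  have heq : (⌊x⌋ : ℝ) + Int.fract x = x := Int.floor_add_fract x
  unfold psi1
  rw [scaleTo_eval 3 (by norm_num) _ _ _ _ _ x (3 * ⌊x⌋) (3 * Int.fract x)
    (by push_cast; linarith) (by linarith) (by linarith)]
  rw [pl4_eval0 (by norm_num) (by norm_num) (by norm_num) (by norm_num) _ (by linarith),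
    aff_id (by norm_num)]
  push_cast
  linarith

lemma psi1_tr (x : ℝ) (hx : Int.fract (x - 1/2) ≤ 1/100) : psi1.F x = x - 1/12 := by
  have h0 := Int.fract_nonneg (x - 1/2)
  have heq : (⌊x - 1/2⌋ : ℝ) + Int.fract (x - 1/2) = x - 1/2 := Int.floor_add_fract _
  unfold psi1
  rw [scaleTo_eval 3 (by norm_num) _ _ _ _ _ x (3 * ⌊x - 1/2⌋ + 1)
    (1/2 + 3 * Int.fract (x - 1/2)) (by push_cast; linarith) (by linarith) (by linarith)]
  rw [pl4_eval2 (by norm_num) (by norm_num) (by norm_num) (by norm_num) _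
    (by linarith) (by linarith),
    aff_slope_one (by norm_num) (by norm_num)]
  push_cast
  linarith

lemma psi2_id (x : ℝ) (hx : Int.fract x ≤ 1/100) : psi2.F x = x := by
  have h0 := Int.fract_nonneg x
  have heq : (⌊x⌋ : ℝ) + Int.fract x = x := Int.floor_add_fract x
  unfold psi2
  rw [scaleTo_eval 2 (by norm_num) _ _ _ _ _ x (2 * ⌊x⌋) (2 * Int.fract x)
    (by push_cast; linarith) (by linarith) (by linarith)]
  rw [pl4_eval0 (by norm_num) (by norm_num) (by norm_num) (by norm_num) _ (by linarith),
    aff_id (by norm_num)]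
  push_cast
  linarith

lemma psi2_tr (x : ℝ) (hx : Int.fract (x - 5/12) ≤ 1/100) : psi2.F x = x - 1/12 := by
  have h0 := Int.fract_nonneg (x - 5/12)
  have heq : (⌊x - 5/12⌋ : ℝ) + Int.fract (x - 5/12) = x - 5/12 := Int.floor_add_fract _
  unfold psi2
  rw [scaleTo_eval 2 (by norm_num) _ _ _ _ _ x (2 * ⌊x - 5/12⌋)
    (5/6 + 2 * Int.fract (x - 5/12)) (by push_cast; linarith) (by linarith) (by linarith)]
  rw [pl4_eval2 (by norm_num) (by norm_num) (by norm_num) (by norm_num) _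
    (by linarith) (by linarith),
    aff_slope_one (by norm_num) (by norm_num)]
  push_cast
  linarith

/-- the key lemma : a lift supported in `[0,1/100] + ℤ` is in the closure. -/
lemma small {H : Lft} (hs : SuppIn H 0 (1/100)) : InC H := by
  have hψ₁ : InC psi1 := inC_scaleTo 3 (by norm_num) _
  have hψ₂ : InC psi2 := inC_scaleTo 2 (by norm_num) _
  have hid1 : ∀ y, Int.fract (y - 0) ≤ 1/100 - 0 → psi1.F y = y := fun y hy =>
    psi1_id y (by simpa using hy)
  have hid2 : ∀ y, Int.fract (y - 0) ≤ 1/100 - 0 → psi2.F y = y := fun y hy =>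
    psi2_id y (by simpa using hy)
  -- pair at distance 1/2
  have h2 : InC (H.comp (conjRot (1/2) H)) :=
    inC_of_per _ 2 le_rfl (fun x => by
      push_cast
      exact per2 (by norm_num) (by norm_num) hs x)
  -- move it to distance 5/12
  have hT1supp : SuppIn (conjRot (1/2) H) (0 + 1/2) (1/100 + 1/2) := conjRot_supp hs (1/2)
  have htr1 : ∀ y, Int.fract (y - (0 + 1/2)) ≤ (1/100 + 1/2) - (0 + 1/2) →
      psi1.F y = y + (-(1:ℝ)/12) := fun y hy => by
    rw [psi1_tr y (by norm_num at hy ⊢; exact hy)]; ring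
  have e1 : ∀ x, (psi1.comp ((H.comp (conjRot (1/2) H)).comp psi1.inv)).F x
      = (H.comp (conjRot (5/12) H)).F x := by
    intro x
    calc psi1.F (H.F ((conjRot (1/2) H).F (psi1.inv.F x)))
        = psi1.F (H.F (psi1.inv.F (psi1.F ((conjRot (1/2) H).F (psi1.inv.F x))))) := by
          rw [F_inv_F]
      _ = H.F (psi1.F ((conjRot (1/2) H).F (psi1.inv.F x))) := conj_id_on hs hid1 _
      _ = H.F ((conjRot (-(1:ℝ)/12) (conjRot (1/2) H)).F x) :=
          congrArg H.F (conj_trans_on hT1supp htr1 x)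
      _ = H.F ((conjRot (5/12) H).F x) := by rw [conjRot_conjRot]; norm_num
  have m1 : InC (H.comp (conjRot (5/12) H)) := by
    have hconj : InC (psi1.comp ((H.comp (conjRot (1/2) H)).comp psi1.inv)) := hψ₁.conj h2
    unfold InC at hconj ⊢
    rw [← toS1_ext e1]
    exact hconj
  -- move it to distance 1/3
  have hT2supp : SuppIn (conjRot (5/12) H) (0 + 5/12) (1/100 + 5/12) := conjRot_supp hs (5/12)
  have htr2 : ∀ y, Int.fract (y - (0 + 5/12)) ≤ (1/100 + 5/12) - (0 + 5/12) →
      psi2.F y = y + (-(1:ℝ)/12) := fun y hy => by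
    rw [psi2_tr y (by norm_num at hy ⊢; exact hy)]; ring
  have e2 : ∀ x, (psi2.comp ((H.comp (conjRot (5/12) H)).comp psi2.inv)).F x
      = (H.comp (conjRot (1/3) H)).F x := by
    intro x
    calc psi2.F (H.F ((conjRot (5/12) H).F (psi2.inv.F x)))
        = psi2.F (H.F (psi2.inv.F (psi2.F ((conjRot (5/12) H).F (psi2.inv.F x))))) := by
          rw [F_inv_F]
      _ = H.F (psi2.F ((conjRot (5/12) H).F (psi2.inv.F x))) := conj_id_on hs hid2 _
      _ = H.F ((conjRot (-(1:ℝ)/12) (conjRot (5/12) H)).F x) :=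
          congrArg H.F (conj_trans_on hT2supp htr2 x)
      _ = H.F ((conjRot (1/3) H).F x) := by rw [conjRot_conjRot]; norm_num
  have m2 : InC (H.comp (conjRot (1/3) H)) := by
    have hconj : InC (psi2.comp ((H.comp (conjRot (5/12) H)).comp psi2.inv)) := hψ₂.conj m1
    unfold InC at hconj ⊢
    rw [← toS1_ext e2]
    exact hconj
  -- rotate the pair to (1/3, 2/3)
  have m3 : InC (conjRot (1/3) (H.comp (conjRot (1/3) H))) := (InC.conjRot_iff _ _).2 m2
  have e3 : ∀ x, (conjRot (1/3) (H.comp (conjRot (1/3) H))).F x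
      = ((conjRot (1/3) H).comp (conjRot (2/3) H)).F x := by
    intro x
    rw [conjRot_comp]
    show (conjRot (1/3) H).F ((conjRot (1/3) (conjRot (1/3) H)).F x)
        = (conjRot (1/3) H).F ((conjRot (2/3) H).F x)
    rw [conjRot_conjRot]
    norm_num
  -- the triple
  have h3 : InC (H.comp ((conjRot (1/3) H).comp (conjRot (2/3) H))) :=
    inC_of_per _ 3 (by norm_num) (fun x => by
      push_cast
      exact per3 (by norm_num) (by norm_num) hs x)
  -- conclude
  unfold InC at h3 m3 ⊢
  rw [toS1_comp] at h3
  rw [toS1_ext e3] at m3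
  have : H.toS1 = H.toS1 * ((conjRot (1/3) H).comp (conjRot (2/3) H)).toS1 *
      (((conjRot (1/3) H).comp (conjRot (2/3) H)).toS1)⁻¹ := by group
  rw [this]
  exact mul_mem h3 (inv_mem m3)

end Lft

namespace Lft

lemma SuppIn.congr {a : Lft} {s t s' t' : ℝ} (h : SuppIn a s t) (hs : s' = s) (ht : t' = t) :
    SuppIn a s' t' := by rw [hs, ht]; exact h

lemma cell_zero (q : ℝ → ℝ) (h0 h1 hmono hcont) : (cell q h0 h1 hmono hcont).F 0 = 0 := by
  rw [cell_F, Int.fract_zero, h0]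
  simp

lemma conj_supp (φ H : Lft) (h0 : φ.F 0 = 0) {L : ℝ} (hL0 : 0 ≤ L) (hL1 : L < 1)
    (hφL : φ.F L < 1) (hs : SuppIn H 0 L) : SuppIn (φ.comp (H.comp φ.inv)) 0 (φ.F L) := by
  intro x hx
  rw [sub_zero, sub_zero] at hx
  set w := φ.inv.F x with hw
  have hφk : ∀ k : ℤ, φ.F k = k := by
    intro k
    have := φ.per_int 0 k
    rw [zero_add, h0, zero_add] at this
    exact this
  have hoff : L - 0 < Int.fract (w - 0) := by
    rw [sub_zero, sub_zero]
    by_contra hc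
    push_neg at hc
    have hfr0 := Int.fract_nonneg w
    have hfl : (⌊w⌋ : ℝ) + Int.fract w = w := Int.floor_add_fract w
    have hb1 : (⌊w⌋:ℝ) ≤ w := by linarith
    have hb2 : w ≤ L + ⌊w⌋ := by linarith
    have hm1 : (⌊w⌋:ℝ) ≤ φ.F w := by
      have := φ.mono.monotone hb1
      rw [hφk] at this
      exact this
    have hm2 : φ.F w ≤ φ.F L + ⌊w⌋ := by
      have := φ.mono.monotone hb2
      rw [φ.per_int L ⌊w⌋] at this
      exact this
    have hfx : Int.fract (φ.F w) ≤ φ.F L := by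
      rw [fract_eq_of (φ.F w) ⌊w⌋ (φ.F w - ⌊w⌋) (by ring) (by linarith) (by linarith)]
      linarith
    have hxw : φ.F w = x := F_F_inv φ x
    rw [hxw] at hfx
    linarith
  show φ.F (H.F (φ.inv.F x)) = x
  rw [hs _ hoff, F_F_inv]

lemma squash_step {H : Lft} {L : ℝ} (n : ℕ) (hn : 2 ≤ n) (k : ℕ) (hk : k + 1 ≤ n)
    (hs : SuppIn H 0 L) (h1 : (k:ℝ)/(n:ℝ) < L) (h2 : L < ((k:ℝ)+1)/(n:ℝ)) :
    ∃ H' : Lft, SuppIn H' 0 (((k:ℝ) + 1/50)/(n:ℝ)) ∧ (InC H' → InC H) := by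
  have hn0 : (0:ℝ) < n := by positivity
  have hm0 : (0:ℝ) < (n:ℝ) * L - k := by
    have := (div_lt_iff₀ hn0).1 h1
    linarith [this]
  have hm1 : (n:ℝ) * L - k < 1 := by
    have := (lt_div_iff₀ hn0).1 h2
    linarith [this]
  set q : ℝ → ℝ := pl2 ((n:ℝ) * L - k) (1/50) with hq
  have hv0 : (0:ℝ) < 1/50 := by norm_num
  have hv1 : (1:ℝ)/50 < 1 := by norm_num
  set φ : Lft := scaleTo n (by omega) (cell q
    (pl2_zero hm0 hm1 hv0 hv1) (pl2_one hm0 hm1 hv0 hv1)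
    (pl2_mono hm0 hm1 hv0 hv1) (pl2_continuous hm0 hm1 hv0 hv1).continuousOn) with hφ
  have hφ0 : φ.F 0 = 0 := by
    rw [hφ, scaleTo_F, mul_zero, cell_zero]
    simp
  have hφL : φ.F L = ((k:ℝ) + 1/50)/(n:ℝ) := by
    rw [hφ, scaleTo_eval n (by omega) _ _ _ _ _ L (k:ℤ) ((n:ℝ)*L - k)
      (by push_cast; ring) hm0.le hm1]
    rw [hq, pl2_at_m hm0 hm1 hv0 hv1]
    push_cast
    ring
  have hL0 : 0 ≤ L := le_trans (by positivity) h1.le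
  have hL1 : L < 1 := lt_of_lt_of_le h2 (by
    rw [div_le_one hn0]
    push_cast
    exact_mod_cast by exact_mod_cast Nat.cast_le.2 hk)
  have hφL1 : φ.F L < 1 := by
    rw [hφL, div_lt_one hn0]
    have : (k:ℝ) + 1 ≤ n := by exact_mod_cast hk
    linarith
  refine ⟨φ.comp (H.comp φ.inv), ?_, ?_⟩
  · have := conj_supp φ H hφ0 hL0 hL1 hφL1 hs
    exact this.congr rfl hφL.symm
  · intro hIn
    exact InC.of_conj (inC_scaleTo n hn _) hIn

lemma arc2 {H : Lft} {L : ℝ} (hs : SuppIn H 0 L) (h0 : 0 < L) (h1 : L < 1/2) : InC H := by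
  obtain ⟨H', hsupp, himp⟩ := squash_step 2 le_rfl 0 (by norm_num) hs
    (by push_cast; simpa using h0) (by push_cast; linarith)
  exact himp (small (hsupp.weaken (by norm_num)))

lemma arc3 {H : Lft} {L : ℝ} (hs : SuppIn H 0 L) (h0 : 1/3 < L) (h1 : L < 2/3) : InC H := by
  obtain ⟨H', hsupp, himp⟩ := squash_step 3 (by norm_num) 1 (by norm_num) hs
    (by push_cast; linarith) (by push_cast; linarith)
  refine himp (arc2 hsupp ?_ ?_) <;> norm_num

lemma arc4 {H : Lft} {L : ℝ} (hs : SuppIn H 0 L) (h0 : 1/2 < L) (h1 : L < 1) : InC H := by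
  obtain ⟨H', hsupp, himp⟩ := squash_step 2 le_rfl 1 (by norm_num) hs
    (by push_cast; linarith) (by push_cast; linarith)
  refine himp (arc3 hsupp ?_ ?_) <;> norm_num

/-- a lift supported in `[0,L] + ℤ` with `L < 1` is in the closure. -/
lemma arc {H : Lft} {L : ℝ} (hs : SuppIn H 0 L) (hL1 : L < 1) : InC H := by
  rcases le_or_gt L (1/100) with h | h
  · exact small (hs.weaken h)
  rcases lt_or_ge L (1/2) with h2 | h2
  · exact arc2 hs (by linarith) h2
  rcases lt_or_ge L (2/3) with h3 | h3
  · exact arc3 hs (by linarith) h3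
  · exact arc4 hs (by linarith) hL1

end Lft

namespace Lft

/-- splitting : a lift fixing `0` is in the closure. -/
lemma fix0 {G : Lft} (hG : G.F 0 = 0) : InC G := by
  set g₁ := G.F (1/2) with hg₁
  have hGint : ∀ k : ℤ, G.F k = k := by
    intro k
    have := G.per_int 0 k
    rw [zero_add, hG, zero_add] at this
    exact this
  have hg₁0 : 0 < g₁ := by
    rw [hg₁, ← hG]
    exact G.mono (by norm_num)
  have hg₁1 : g₁ < 1 := by
    have h1 : G.F 1 = 1 := by exact_mod_cast hGint 1
    have h2 : G.F (1/2) < G.F 1 := G.mono (by norm_num)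
    rw [h1] at h2
    rw [hg₁]
    exact h2
  set b := (max (1/2) g₁ + 1)/2 with hb
  have hmax1 : max (1/2:ℝ) g₁ < 1 := max_lt (by norm_num) hg₁1
  have hb2 : (1:ℝ)/2 < b := by
    have : (1:ℝ)/2 ≤ max (1/2) g₁ := le_max_left _ _
    rw [hb]; linarith
  have hbg : g₁ < b := by
    have : g₁ ≤ max (1/2) g₁ := le_max_right _ _
    rw [hb]; linarith
  have hb1 : b < 1 := by rw [hb]; linarith
  have hb0 : (0:ℝ) < b := by linarith
  set u0 : ℝ → ℝ := fun t => if t ≤ 1/2 then G.F t else if t ≤ b then aff (1/2) g₁ b b t else t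
    with hu0
  have hev0 : ∀ t : ℝ, t ≤ 1/2 → u0 t = G.F t := fun t ht => by
    rw [hu0]; exact if_pos ht
  have hev1 : ∀ t : ℝ, 1/2 ≤ t → t ≤ b → u0 t = aff (1/2) g₁ b b t := fun t ht1 ht2 => by
    rw [hu0]
    dsimp only
    rcases le_or_gt t (1/2) with h | h
    · have hth : t = 1/2 := le_antisymm h ht1
      rw [if_pos h, hth, aff_left]
    · rw [if_neg (not_le.2 h), if_pos ht2]
  have hev2 : ∀ t : ℝ, b ≤ t → u0 t = t := fun t ht => by
    rw [hu0]
    dsimp only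
    rcases le_or_gt t b with h | h
    · have htb : t = b := le_antisymm h ht
      rw [if_neg (not_le.2 (by linarith : (1:ℝ)/2 < t)), if_pos h, htb, aff_right _ _ hb2]
    · rw [if_neg (by linarith), if_neg (not_le.2 h)]
  have hu0val0 : u0 0 = 0 := by rw [hev0 0 (by norm_num), hG]
  have hu0val1 : u0 1 = 1 := hev2 1 hb1.le
  have hu0mono : StrictMonoOn u0 (Set.Icc 0 1) := by
    apply strictMonoOn_glue (by norm_num : (0:ℝ) ≤ 1/2) (by linarith : (1:ℝ)/2 ≤ 1)
    · intro s hs t ht hst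
      rw [hev0 _ hs.2, hev0 _ ht.2]
      exact G.mono hst
    · apply strictMonoOn_glue hb2.le hb1.le
      · intro s hs t ht hst
        rw [hev1 _ hs.1 hs.2, hev1 _ ht.1 ht.2]
        exact aff_strictMono hb2 hbg hst
      · intro s hs t ht hst
        rw [hev2 _ hs.1, hev2 _ ht.1]
        exact hst
  have hu0cont : Continuous u0 := by
    rw [hu0]
    apply Continuous.if_le G.continuous_F ?_ continuous_id continuous_const
    · intro t ht
      have ht' : t = 1/2 := ht
      rw [ht', if_pos hb2.le, aff_left]
    · apply Continuous.if_le (aff_continuous _ _ _ _) continuous_id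
        continuous_id continuous_const
      intro t ht
      have ht' : t = b := ht
      rw [ht', aff_right _ _ hb2]
      rfl
  set U : Lft := cell u0 hu0val0 hu0val1 hu0mono hu0cont.continuousOn with hU
  have hUsupp : SuppIn U 0 b := by
    intro x hx
    rw [sub_zero, sub_zero] at hx
    rw [hU, cell_F, hev2 _ hx.le]
    have := Int.floor_add_fract x
    linarith
  have hUInC : InC U := arc hUsupp hb1
  set V : Lft := G.comp U.inv with hV
  have hUF : ∀ x, U.F x = (⌊x⌋:ℝ) + u0 (Int.fract x) := fun x => by rw [hU, cell_F]
  have hU0 : U.F 0 = 0 := by rw [hU, cell_zero]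
  have hUhalf : U.F (1/2) = g₁ := by
    rw [hUF, Int.fract_eq_self.2 ⟨by norm_num, by norm_num⟩,
      show ⌊(1/2:ℝ)⌋ = 0 from Int.floor_eq_zero_iff.2 ⟨by norm_num, by norm_num⟩,
      hev0 _ le_rfl]
    push_cast
    ring
  have hVsupp : SuppIn V g₁ 1 := by
    intro x hx
    have he1 : Int.fract (x - g₁) < 1 := Int.fract_lt_one _
    have hk : (⌊x - g₁⌋:ℝ) + Int.fract (x - g₁) = x - g₁ := Int.floor_add_fract _
    set j : ℤ := ⌊x - g₁⌋ + 1 with hj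
    have hxj1 : (0:ℝ) < x - j := by rw [hj]; push_cast; linarith
    have hxj2 : x - j < g₁ := by rw [hj]; push_cast; linarith
    have hUj : U.F j = j := by
      have h := U.per_int 0 j
      rw [zero_add, hU0, zero_add] at h
      exact h
    have hUj2 : U.F (1/2 + j) = g₁ + j := by
      rw [U.per_int (1/2) j, hUhalf]
    set w := U.inv.F x with hw
    have hUw : U.F w = x := F_F_inv U x
    have hw1 : (j:ℝ) < w := by
      by_contra hc
      push_neg at hc
      have := U.mono.monotone hc
      rw [hUw, hUj] at this
      linarith
    have hw2 : w < 1/2 + j := by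
      by_contra hc
      push_neg at hc
      have := U.mono.monotone hc
      rw [hUw, hUj2] at this
      linarith
    have hfrw : Int.fract w = w - j := fract_eq_of w j (w - j) (by ring) (by linarith)
      (by linarith)
    have hflw : ⌊w⌋ = j := by
      rw [Int.floor_eq_iff]
      constructor
      · exact hw1.le
      · push_cast; linarith
    have hUwval : U.F w = (j:ℝ) + G.F (w - j) := by
      rw [hUF, hfrw, hflw, hev0 _ (by linarith)]
    have hGw : G.F w = x := by
      have := G.per_int (w - j) j
      rw [show w - j + j = w by ring] at this
      rw [this]
      rw [hUwval] at hUw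
      linarith
    show G.F (U.inv.F x) = x
    rw [← hw, hGw]
  have hVInC : InC V := by
    have hconj := conjRot_supp hVsupp (-g₁)
    have hsupp' : SuppIn (conjRot (-g₁) V) 0 (1 + -g₁) :=
      hconj.congr (by ring) rfl
    have := arc hsupp' (by linarith)
    exact (InC.conjRot_iff (-g₁) V).1 this
  have hcomp : InC (V.comp U) := hVInC.comp hUInC
  have e : ∀ x, (V.comp U).F x = G.F x := fun x => by
    show G.F (U.inv.F (U.F x)) = G.F x
    rw [F_inv_F]
  unfold InC at hcomp ⊢
  rw [← toS1_ext e]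
  exact hcomp

end Lft

/-- The set of orientation-preserving circle homeomorphisms commuting with some nontrivial
finite-order rotation generates the group `Homeo₀(S¹)`. -/
theorem stmt14 (f : S1 ≃ₜ S1) (hf : IsOP f) : f ∈ Subgroup.closure RotComm := by
  obtain ⟨F, hmono, hper, hproj⟩ := hf
  set a : Lft := ⟨⇑F, hmono, F.surjective, hper⟩ with ha
  have hf_eq : f = a.toS1 := by
    apply Homeomorph.ext
    intro x
    induction x using QuotientAddGroup.induction_on with
    | H x =>
      show f (pr x) = pr (a.F x)
      exact hproj x
  set G : Lft := (Lft.rot (-(F 0))).comp a with hGdef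
  have hG0 : G.F 0 = 0 := by
    show a.F 0 + (-(F 0)) = 0
    show F 0 + (-(F 0)) = 0
    ring
  have hGInC : Lft.InC G := Lft.fix0 hG0
  have e : ∀ x, ((Lft.rot (F 0)).comp G).F x = a.F x := by
    intro x
    show (a.F x + (-(F 0))) + F 0 = a.F x
    ring
  have : Lft.InC a := by
    unfold Lft.InC at hGInC ⊢
    rw [← Lft.toS1_ext e, Lft.toS1_comp]
    exact mul_mem (Lft.inC_rot (F 0)) hGInC
  rw [hf_eq]
  exact this
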